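/- Let 0 < s < 1 and let f : ℝ³ → ℝ satisfy the global Hölder bound |f(x) − f(y)| ≤ H·δ(x,y)^s for all x, y ∈ ℝ³ and some H > 0. Let Ψ ∈ L¹(ℝ³) satisfy ∫_{ℝ³} Ψ(y) dy = 0 and I = ∫_{ℝ³} ‖y‖^s |Ψ(y)| dy < ∞. Then for every a ∈ ℝ³ and every λ > 0, the integral ∫_{ℝ³} f(a∗(λ∘y)) Ψ(y) dy is well defined and satisfies |∫_{ℝ³} f(a∗(λ∘y)) Ψ(y) dy| ≤ H·I·λ^s. In particular, the wavelet-type coefficients d_{j,k} = 2^{4j} ∫_{ℝ³} f(x) Ψ(2^j∘(x_{j,k}⁻¹∗x)) dx satisfy |d_{j,k}| ≤ H·I·2^{−js} for all j ∈ ℤ and k ∈ ℤ³. -/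

import Mathlib

noncomputable section

open MeasureTheory
open scoped ENNReal

/-- The underlying space of the Heisenberg group: `ℝ³`. -/
abbrev H3 : Type := ℝ × ℝ × ℝ

/-- The Heisenberg group law `(p,q,r)∗(p',q',r') = (p+p', q+q', r+r'+2(qp'−pq'))`. -/
def Hmul (x y : H3) : H3 :=
  (x.1 + y.1, x.2.1 + y.2.1, x.2.2 + y.2.2 + 2 * (x.2.1 * y.1 - x.1 * y.2.1))

/-- The inverse for the Heisenberg group law. -/
def Hinv (x : H3) : H3 := (-x.1, -x.2.1, -x.2.2)

/-- The homogeneous (gauge) norm `‖(p,q,r)‖ = ((p²+q²)²+r²)^(1/4)`. -/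
def Hnorm (x : H3) : ℝ := ((x.1 ^ 2 + x.2.1 ^ 2) ^ 2 + x.2.2 ^ 2) ^ ((1 : ℝ) / 4)

/-- The gauge distance `δ(x,y) = ‖x⁻¹∗y‖`. -/
def Hdist (x y : H3) : ℝ := Hnorm (Hmul (Hinv x) y)

/-- The gauge ball `B(x,r)`. -/
def Hball (x : H3) (r : ℝ) : Set H3 := {y | Hdist x y < r}

/-- The dilation `λ∘(p,q,r) = (λp, λq, λ²r)`. -/
def Hdil (l : ℝ) (x : H3) : H3 := (l * x.1, l * x.2.1, l ^ 2 * x.2.2)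

/-- A lattice point of `ℤ³` seen inside `ℝ³`. -/
def latticePt (k : ℤ × ℤ × ℤ) : H3 := ((k.1 : ℝ), (k.2.1 : ℝ), (k.2.2 : ℝ))

/-- The dyadic point `x_{j,k} = 2^{−j}∘k`. -/
def xjk (j : ℤ) (k : ℤ × ℤ × ℤ) : H3 := Hdil ((2 : ℝ) ^ (-j)) (latticePt k)

/-! ### Auxiliary lemmas -/

lemma Hinv_mul_cancel (a z : H3) : Hmul (Hinv a) (Hmul a z) = z := by
  simp only [Hmul, Hinv]
  ext <;> (simp; try ring)

lemma Hdil_dil (c d : ℝ) (y : H3) : Hdil c (Hdil d y) = Hdil (c * d) y := by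
  simp only [Hdil]
  ext <;> (simp; try ring)

lemma Hdil_one (y : H3) : Hdil 1 y = y := by
  simp [Hdil]

lemma Hnorm_nonneg (y : H3) : 0 ≤ Hnorm y :=
  Real.rpow_nonneg (by positivity) _

lemma Hnorm_dil {l : ℝ} (hl : 0 ≤ l) (y : H3) : Hnorm (Hdil l y) = l * Hnorm y := by
  simp only [Hnorm, Hdil]
  have h1 : ((l * y.1) ^ 2 + (l * y.2.1) ^ 2) ^ 2 + (l ^ 2 * y.2.2) ^ 2
      = l ^ 4 * ((y.1 ^ 2 + y.2.1 ^ 2) ^ 2 + y.2.2 ^ 2) := by ring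
  rw [h1, Real.mul_rpow (by positivity) (by positivity)]
  congr 1
  rw [← Real.rpow_natCast l 4, ← Real.rpow_mul hl]
  norm_num

lemma Hdist_left (a z : H3) : Hdist a (Hmul a z) = Hnorm z := by
  rw [Hdist, Hinv_mul_cancel]

lemma Hnorm_continuous : Continuous Hnorm := by
  apply Continuous.rpow_const (by fun_prop)
  intro x; right; norm_num

lemma Hdist_continuous (x : H3) : Continuous fun y => Hdist x y := by
  apply Hnorm_continuous.comp
  unfold Hmul Hinv
  fun_prop

lemma Hdist_self (x : H3) : Hdist x x = 0 := by
  have h : Hmul (Hinv x) x = ((0 : ℝ), (0 : ℝ), (0 : ℝ)) := by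
    simp only [Hmul, Hinv]; ext <;> (simp; try ring)
  rw [Hdist, h, Hnorm]
  norm_num [Real.zero_rpow (show (1:ℝ)/4 ≠ 0 by norm_num)]

lemma map_affine (c d : ℝ) (hd : d ≠ 0) :
    Measure.map (fun x : ℝ => c + d * x) volume = ENNReal.ofReal |d⁻¹| • volume := by
  have h : (fun x : ℝ => c + d * x) = (fun x => c + x) ∘ (fun x => d * x) := rfl
  rw [h, ← Measure.map_map (by fun_prop) (by fun_prop)]
  rw [show (fun x : ℝ => d * x) = (d * ·) from rfl, Real.map_volume_mul_left hd]
  rw [Measure.map_smul, map_add_left_eq_self volume c]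

lemma mp_affine (c d : ℝ) (hd : d ≠ 0) :
    MeasurePreserving (fun x : ℝ => c + d * x) volume (ENNReal.ofReal |d⁻¹| • volume) :=
  ⟨by fun_prop, map_affine c d hd⟩

lemma prod_smul_smul (c d : ℝ≥0∞) {X Y : Type*} [MeasurableSpace X] [MeasurableSpace Y]
    (μ : Measure X) (ν : Measure Y) [SigmaFinite μ] [SigmaFinite ν] :
    (c • μ).prod (d • ν) = (c * d) • (μ.prod ν) := by
  ext s hs
  rw [Measure.prod_apply hs, Measure.smul_apply, Measure.prod_apply hs, lintegral_smul_measure]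
  simp only [Measure.smul_apply, smul_eq_mul]
  rw [lintegral_const_mul _ (measurable_measure_prodMk_left hs)]
  ring

lemma mp_heis (a : H3) (l : ℝ) (hl : 0 < l) :
    MeasurePreserving (fun y : H3 => Hmul a (Hdil l y)) volume
      (ENNReal.ofReal (l ^ 4)⁻¹ • volume) := by
  have hl' : l ≠ 0 := hl.ne'
  have hl2 : l ^ 2 ≠ 0 := pow_ne_zero _ hl'
  have hinner : ∀ y₁ : ℝ, MeasurePreserving
      (fun p : ℝ × ℝ => (a.2.1 + l * p.1,
        (a.2.2 + 2 * (a.2.1 * (l * y₁))) + (l ^ 2 * p.2 - 2 * (a.1 * (l * p.1))))) volume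
      ((ENNReal.ofReal |l⁻¹| • volume).prod (ENNReal.ofReal |(l ^ 2)⁻¹| • volume)) := by
    intro y₁
    have h := MeasurePreserving.skew_product (μc := (volume : Measure ℝ))
      (mp_affine a.2.1 l hl')
      (g := fun p1 p2 => (a.2.2 + 2 * (a.2.1 * (l * y₁)) - 2 * (a.1 * (l * p1))) + l ^ 2 * p2)
      (by fun_prop)
      (Filter.Eventually.of_forall fun p1 => map_affine _ (l ^ 2) hl2)
    have hv : (volume : Measure (ℝ × ℝ)) = (volume : Measure ℝ).prod volume :=
      Measure.volume_eq_prod ℝ ℝ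
    rw [hv]
    convert h using 2 with p
    · rfl
    ext <;> (simp; try ring)
  have houter := MeasurePreserving.skew_product (μc := (volume : Measure (ℝ × ℝ)))
    (mp_affine a.1 l hl')
    (g := fun y₁ p => (a.2.1 + l * p.1,
      (a.2.2 + 2 * (a.2.1 * (l * y₁))) + (l ^ 2 * p.2 - 2 * (a.1 * (l * p.1)))))
    (by fun_prop)
    (Filter.Eventually.of_forall fun y₁ => (hinner y₁).map_eq)
  have hveq : (volume : Measure H3) = (volume : Measure ℝ).prod volume :=
    Measure.volume_eq_prod ℝ (ℝ × ℝ)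
  rw [hveq]
  have hfun : (fun y : H3 => Hmul a (Hdil l y)) =
      (fun p : ℝ × (ℝ × ℝ) => (a.1 + l * p.1, (a.2.1 + l * p.2.1,
        (a.2.2 + 2 * (a.2.1 * (l * p.1))) + (l ^ 2 * p.2.2 - 2 * (a.1 * (l * p.2.1)))))) := by
    funext y
    simp only [Hmul, Hdil]
    ext <;> (simp; try ring)
  rw [hfun]
  convert houter using 1
  · rfl
  · rfl
  rw [prod_smul_smul, prod_smul_smul, ← Measure.volume_eq_prod ℝ ℝ]
  congr 1
  rw [← ENNReal.ofReal_mul (abs_nonneg _), ← ENNReal.ofReal_mul (by positivity)]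
  congr 1
  rw [abs_of_pos (by positivity), abs_of_pos (by positivity)]
  field_simp

/-- If `f` is globally `s`-Hölder (`0 < s < 1`) and `Ψ ∈ L¹` has a vanishing
integral with `I = ∫ ‖y‖^s |Ψ(y)| dy < ∞`, then for every `a` and `λ > 0` the integral
`∫ f(a∗(λ∘y)) Ψ(y) dy` is well defined and bounded by `H·I·λ^s`; in particular the wavelet-type
coefficients `d_{j,k} = 2^{4j} ∫ f(x) Ψ(2^j∘(x_{j,k}⁻¹∗x)) dx` satisfy `|d_{j,k}| ≤ H·I·2^{−js}`. -/
theorem heisenberg_holder_wavelet_bound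
    (s H : ℝ) (hs0 : 0 < s) (hs1 : s < 1) (hH : 0 < H)
    (f Ψ : H3 → ℝ)
    (hf : ∀ x y : H3, |f x - f y| ≤ H * Hdist x y ^ s)
    (hΨint : Integrable Ψ (volume : Measure H3))
    (hΨ0 : ∫ y : H3, Ψ y = 0)
    (hI : Integrable (fun y : H3 => Hnorm y ^ s * |Ψ y|) (volume : Measure H3)) :
    (∀ a : H3, ∀ l : ℝ, 0 < l →
        Integrable (fun y : H3 => f (Hmul a (Hdil l y)) * Ψ y) (volume : Measure H3) ∧
        |∫ y : H3, f (Hmul a (Hdil l y)) * Ψ y| ≤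
          H * (∫ y : H3, Hnorm y ^ s * |Ψ y|) * l ^ s) ∧
    (∀ j : ℤ, ∀ k : ℤ × ℤ × ℤ,
        |(2 : ℝ) ^ (4 * j) *
            ∫ x : H3, f x * Ψ (Hdil ((2 : ℝ) ^ j) (Hmul (Hinv (xjk j k)) x))| ≤
          H * (∫ y : H3, Hnorm y ^ s * |Ψ y|) * (2 : ℝ) ^ (-(j : ℝ) * s)) := by
  -- continuity of f
  have hfc : Continuous f := by
    rw [continuous_iff_continuousAt]
    intro x
    have habs : Filter.Tendsto (fun y => |f y - f x|) (nhds x) (nhds 0) := by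
      apply squeeze_zero (g := fun y => H * Hdist x y ^ s) (fun y => abs_nonneg _)
        (fun y => by rw [abs_sub_comm]; exact hf x y)
      have hcont : Continuous fun y => H * Hdist x y ^ s :=
        continuous_const.mul ((Hdist_continuous x).rpow_const fun y => Or.inr hs0.le)
      have h0 : H * Hdist x x ^ s = 0 := by
        rw [Hdist_self, Real.zero_rpow hs0.ne', mul_zero]
      have := hcont.continuousAt (x := x)
      rw [ContinuousAt, h0] at this
      exact this
    rw [ContinuousAt]
    have h1 : Filter.Tendsto (fun y => f y - f x) (nhds x) (nhds 0) := by
      rwa [tendsto_zero_iff_abs_tendsto_zero]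
    have h2 := h1.add_const (f x)
    simpa using h2
  -- part 1
  have main : ∀ a : H3, ∀ l : ℝ, 0 < l →
      Integrable (fun y : H3 => f (Hmul a (Hdil l y)) * Ψ y) (volume : Measure H3) ∧
      |∫ y : H3, f (Hmul a (Hdil l y)) * Ψ y| ≤
        H * (∫ y : H3, Hnorm y ^ s * |Ψ y|) * l ^ s := by
    intro a l hl
    set T : H3 → H3 := fun y => Hmul a (Hdil l y) with hT
    have hTc : Continuous T := by
      unfold T; unfold Hmul Hdil; fun_prop
    have key : ∀ y : H3, |f (T y) - f a| ≤ (H * l ^ s) * Hnorm y ^ s := by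
      intro y
      have h1 : |f (T y) - f a| ≤ H * Hdist a (T y) ^ s := by
        rw [abs_sub_comm]; exact hf a (T y)
      have h2 : Hdist a (T y) = l * Hnorm y := by
        rw [hT, Hdist_left, Hnorm_dil hl.le]
      rw [h2, Real.mul_rpow hl.le (Hnorm_nonneg y)] at h1
      calc |f (T y) - f a| ≤ H * (l ^ s * Hnorm y ^ s) := h1
        _ = (H * l ^ s) * Hnorm y ^ s := by ring
    have hbd : ∀ y : H3, ‖(f (T y) - f a) * Ψ y‖ ≤ (H * l ^ s) * (Hnorm y ^ s * |Ψ y|) := by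
      intro y
      rw [Real.norm_eq_abs, abs_mul, ← mul_assoc]
      exact mul_le_mul_of_nonneg_right (key y) (abs_nonneg _)
    have h1 : Integrable (fun y : H3 => (f (T y) - f a) * Ψ y) (volume : Measure H3) := by
      apply Integrable.mono' (hI.const_mul (H * l ^ s))
      · exact (((hfc.comp hTc).sub continuous_const).aestronglyMeasurable).mul
          hΨint.aestronglyMeasurable
      · exact Filter.Eventually.of_forall hbd
    have hsplit : (fun y : H3 => f (T y) * Ψ y)
        = fun y => (f (T y) - f a) * Ψ y + f a * Ψ y := funext fun y => by ring
    have hint : Integrable (fun y : H3 => f (T y) * Ψ y) (volume : Measure H3) := by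
      rw [hsplit]; exact h1.add (hΨint.const_mul _)
    refine ⟨hint, ?_⟩
    have heq : ∫ y : H3, f (T y) * Ψ y = ∫ y : H3, (f (T y) - f a) * Ψ y := by
      rw [hsplit, integral_add h1 (hΨint.const_mul _), integral_const_mul, hΨ0,
        mul_zero, add_zero]
    rw [heq]
    calc |∫ y : H3, (f (T y) - f a) * Ψ y|
        ≤ ∫ y : H3, |(f (T y) - f a) * Ψ y| := by
          have := norm_integral_le_integral_norm (μ := (volume : Measure H3))
            (fun y : H3 => (f (T y) - f a) * Ψ y)
          simpa only [Real.norm_eq_abs] using this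
      _ ≤ ∫ y : H3, (H * l ^ s) * (Hnorm y ^ s * |Ψ y|) := by
          apply integral_mono h1.abs (hI.const_mul _)
          intro y
          simpa only [Real.norm_eq_abs] using hbd y
      _ = (H * l ^ s) * ∫ y : H3, Hnorm y ^ s * |Ψ y| := integral_const_mul _ _
      _ = H * (∫ y : H3, Hnorm y ^ s * |Ψ y|) * l ^ s := by ring
  refine ⟨main, ?_⟩
  -- part 2
  intro j k
  set a : H3 := xjk j k with ha
  set l : ℝ := (2 : ℝ) ^ (-j) with hldef
  have hl : 0 < l := zpow_pos (by norm_num) _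
  set T : H3 → H3 := fun y => Hmul a (Hdil l y) with hT
  set G : H3 → ℝ := fun x => f x * Ψ (Hdil ((2 : ℝ) ^ j) (Hmul (Hinv a) x)) with hG
  have hGT : ∀ y : H3, G (T y) = f (T y) * Ψ y := by
    intro y
    have h1 : Hdil ((2 : ℝ) ^ j) (Hmul (Hinv a) (T y)) = y := by
      rw [hT]
      show Hdil ((2 : ℝ) ^ j) (Hmul (Hinv a) (Hmul a (Hdil l y))) = y
      rw [Hinv_mul_cancel, Hdil_dil, hldef, ← zpow_add₀ (two_ne_zero), add_neg_cancel,
        zpow_zero, Hdil_one]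
    rw [hG]
    show f (T y) * Ψ (Hdil ((2 : ℝ) ^ j) (Hmul (Hinv a) (T y))) = f (T y) * Ψ y
    rw [h1]
  -- injectivity of T
  have hinj : Function.Injective T := by
    have hli : Function.LeftInverse (fun x => Hdil l⁻¹ (Hmul (Hinv a) x)) T := by
      intro y
      rw [hT]
      show Hdil l⁻¹ (Hmul (Hinv a) (Hmul a (Hdil l y))) = y
      rw [Hinv_mul_cancel, Hdil_dil, inv_mul_cancel₀ hl.ne', Hdil_one]
    exact hli.injective
  have hTc : Continuous T := by
    unfold T; unfold Hmul Hdil; fun_prop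
  have hemb : MeasurableEmbedding T := hTc.measurableEmbedding hinj
  have hci := (mp_heis a l hl).integral_comp hemb G
  -- hci : ∫ y, G (T y) = ∫ x, G x ∂(ofReal (l^4)⁻¹ • volume)
  rw [integral_smul_measure, ENNReal.toReal_ofReal (by positivity)] at hci
  have hGTeq : (fun y : H3 => G (T y)) = fun y => f (T y) * Ψ y := funext hGT
  rw [hGTeq] at hci
  -- hci : ∫ y, f (T y) * Ψ y = (l^4)⁻¹ • ∫ x, G x
  have hintG : ∫ x : H3, G x = l ^ 4 * ∫ y : H3, f (T y) * Ψ y := by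
    rw [hci, smul_eq_mul]; field_simp
  have hcoef : (2 : ℝ) ^ (4 * j) * l ^ 4 = 1 := by
    rw [hldef, ← zpow_natCast ((2 : ℝ) ^ (-j)) 4, ← zpow_mul, ← zpow_add₀ (two_ne_zero)]
    have h0 : (4 * j + -j * ((4:ℕ):ℤ)) = 0 := by push_cast; ring
    rw [h0, zpow_zero]
  have hfinal : (2 : ℝ) ^ (4 * j) * ∫ x : H3, G x = ∫ y : H3, f (T y) * Ψ y := by
    rw [hintG, ← mul_assoc, hcoef, one_mul]
  have hrw : (2 : ℝ) ^ (-(j : ℝ) * s) = l ^ s := by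
    rw [hldef, show ((2 : ℝ) ^ (-j) : ℝ) = (2 : ℝ) ^ (((-j : ℤ) : ℝ)) from
      (Real.rpow_intCast 2 (-j)).symm, ← Real.rpow_mul (by norm_num)]
    push_cast
    ring_nf
  calc |(2 : ℝ) ^ (4 * j) * ∫ x : H3, G x| = |∫ y : H3, f (T y) * Ψ y| := by rw [hfinal]
    _ ≤ H * (∫ y : H3, Hnorm y ^ s * |Ψ y|) * l ^ s := (main a l hl).2
    _ = H * (∫ y : H3, Hnorm y ^ s * |Ψ y|) * (2 : ℝ) ^ (-(j : ℝ) * s) := by rw [hrw]
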